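/- There is an isomorphism of topological groups from the additive group ∏_p ℤ_p (the product over all primes p of the p-adic integers, with the product topology) onto the Pontryagin dual of the discrete additive group ℚ/ℤ, where the Pontryagin dual of a discrete abelian group A is the group of all group homomorphisms from A to the circle group, with the topology of pointwise convergence (equivalently, the compact-open topology). -/

import Mathlib

open Real

noncomputable section

namespace QZAux

/-- The exponential `ℚ → Circle`. -/
def ee (q : ℚ) : Circle := Circle.exp (2 * π * q)

lemma ee_add (q r : ℚ) : ee (q + r) = ee q * ee r := by
  simp only [ee]
  rw [← Circle.exp_add]
  push_cast
  ring_nf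

lemma ee_int (k : ℤ) : ee (k : ℚ) = 1 := by
  rw [ee, Circle.exp_eq_one]
  exact ⟨k, by push_cast; ring⟩

lemma ee_eq_one_iff {q : ℚ} : ee q = 1 ↔ ∃ k : ℤ, q = k := by
  rw [ee, Circle.exp_eq_one]
  constructor
  · rintro ⟨n, hn⟩
    refine ⟨n, ?_⟩
    have hπ : (2 * π) ≠ 0 := by positivity
    have h2 : ((q : ℝ)) * (2 * π) = (n : ℝ) * (2 * π) := by linarith
    have := mul_right_cancel₀ hπ h2
    exact_mod_cast this
  · rintro ⟨k, rfl⟩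
    exact ⟨k, by push_cast; ring⟩

/-- `ee` as an additive-to-additive hom. -/
def eeHom : ℚ →+ Additive Circle := AddMonoidHom.mk' (fun q => Additive.ofMul (ee q)) ee_add

lemma ee_zpow (n : ℤ) (q : ℚ) : ee ((n : ℚ) * q) = ee q ^ n := by
  have h := map_zsmul eeHom n q
  have h2 : Additive.ofMul (ee ((n:ℚ) * q)) = Additive.ofMul (ee q ^ n) := by
    rw [← zsmul_eq_mul] at *
    exact h
  exact Additive.ofMul.injective h2

lemma ee_npow (n : ℕ) (q : ℚ) : ee ((n : ℚ) * q) = ee q ^ n := by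
  have := ee_zpow (n : ℤ) q
  push_cast at this
  simpa using this

lemma den_mul_self (q : ℚ) : (q.den : ℚ) * q = (q.num : ℚ) := by
  rw [mul_comm]
  exact_mod_cast Rat.mul_den_eq_num q

lemma ee_congr {q : ℚ} {m m' : ℤ} (h : (q.den : ℤ) ∣ m - m') : ee ((m : ℚ) * q) = ee ((m' : ℚ) * q) := by
  obtain ⟨c, hc⟩ := h
  have hcQ : (m : ℚ) - m' = (q.den : ℚ) * c := by exact_mod_cast congrArg (Int.cast : ℤ → ℚ) hc
  have key : (m : ℚ) * q = (m' : ℚ) * q + ((c * q.num : ℤ) : ℚ) := by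
    push_cast
    linear_combination q * hcQ + (c : ℚ) * den_mul_self q
  rw [key, ee_add, ee_int, mul_one]

local instance factPrimes (p : Nat.Primes) : Fact (p.1.Prime) := ⟨p.2⟩

/-- auxiliary residue function -/
def tfun (x : ∀ p : Nat.Primes, ℤ_[(p : ℕ)]) (n : ℕ) : ℕ → ℕ := fun p =>
  if hp : p.Prime then (@PadicInt.toZModPow p ⟨hp⟩ (n.factorization p) (x ⟨p, hp⟩)).val else 0

lemma MxHs (n : ℕ) : ∀ p ∈ n.primeFactors, (fun p => p ^ n.factorization p) p ≠ 0 :=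
  fun p hp => pow_ne_zero _ (Nat.prime_of_mem_primeFactors hp).pos.ne'

lemma MxCop (n : ℕ) :
    Set.Pairwise ↑n.primeFactors (Function.onFun Nat.Coprime fun p => p ^ n.factorization p) :=
  fun p hp q hq hne =>
    Nat.Coprime.pow _ _
      ((Nat.coprime_primes (Nat.prime_of_mem_primeFactors hp)
        (Nat.prime_of_mem_primeFactors hq)).mpr hne)

/-- CRT integer attached to `x` and modulus `n`. -/
def Mx (x : ∀ p : Nat.Primes, ℤ_[(p : ℕ)]) (n : ℕ) : ℕ :=
  (Nat.chineseRemainderOfFinset (tfun x n) (fun p => p ^ n.factorization p) n.primeFactors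
    (MxHs n) (MxCop n)).1

lemma Mx_spec (x : ∀ p : Nat.Primes, ℤ_[(p : ℕ)]) {n p : ℕ} (hp : p ∈ n.primeFactors) :
    ((Mx x n : ℕ) : ZMod (p ^ n.factorization p)) =
      @PadicInt.toZModPow p ⟨Nat.prime_of_mem_primeFactors hp⟩
        (n.factorization p) (x ⟨p, Nat.prime_of_mem_primeFactors hp⟩) := by
  have pp := Nat.prime_of_mem_primeFactors hp
  haveI : NeZero (p ^ n.factorization p) := ⟨pow_ne_zero _ pp.pos.ne'⟩
  have h := (Nat.chineseRemainderOfFinset (tfun x n) (fun p => p ^ n.factorization p)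
      n.primeFactors (MxHs n) (MxCop n)).2 p hp
  have h2 : ((Mx x n : ℕ) : ZMod (p ^ n.factorization p)) = ((tfun x n p : ℕ) : _) :=
    (ZMod.natCast_eq_natCast_iff _ _ _).mpr h
  rw [h2, tfun, dif_pos pp]
  exact ZMod.natCast_zmod_val _

lemma int_dvd_of_forall_primepow {d : ℕ} (hd : d ≠ 0) {a b : ℤ}
    (h : ∀ p ∈ d.primeFactors, ((p : ℤ) ^ d.factorization p) ∣ a - b) : (d : ℤ) ∣ a - b := by
  have hprod : (∏ p ∈ d.primeFactors, (p : ℤ) ^ d.factorization p) = (d : ℤ) := by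
    have := Nat.factorization_prod_pow_eq_self hd
    rw [Finsupp.prod] at this
    rw [show d.factorization.support = d.primeFactors from rfl] at this
    exact_mod_cast congrArg (Nat.cast : ℕ → ℤ) this
  rw [← hprod]
  refine Finset.prod_dvd_of_coprime ?_ h
  intro p hp q hq hne
  exact IsCoprime.pow <| Nat.isCoprime_iff_coprime.mpr <|
    (Nat.coprime_primes (Nat.prime_of_mem_primeFactors hp)
      (Nat.prime_of_mem_primeFactors hq)).mpr hne

lemma dvd_of_zmod_eq {m : ℕ} {a b : ℕ} (h : ((a : ℕ) : ZMod m) = b) :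
    ((m : ℤ)) ∣ (a : ℤ) - (b : ℤ) := by
  have h2 := ((ZMod.natCast_eq_natCast_iff _ _ _).mp h).dvd
  exact dvd_sub_comm.mp h2

lemma Mx_mod_dvd (x : ∀ p : Nat.Primes, ℤ_[(p : ℕ)]) {n d : ℕ} (hn : n ≠ 0) (hdvd : d ∣ n) :
    (d : ℤ) ∣ (Mx x n : ℤ) - (Mx x d : ℤ) := by
  have hd : d ≠ 0 := fun h => hn (by simpa [h, zero_dvd_iff] using hdvd)
  apply int_dvd_of_forall_primepow hd
  intro p hp
  have pp := Nat.prime_of_mem_primeFactors hp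
  haveI : Fact p.Prime := ⟨pp⟩
  have hpn : p ∈ n.primeFactors := Nat.primeFactors_mono hdvd hn hp
  have hple : d.factorization p ≤ n.factorization p :=
    (Nat.factorization_le_iff_dvd hd hn).mpr hdvd p
  have e1 : ((Mx x n : ℕ) : ZMod (p ^ d.factorization p)) =
      @PadicInt.toZModPow p ⟨pp⟩ (d.factorization p) (x ⟨p, pp⟩) := by
    have h1 := congrArg (ZMod.castHom (pow_dvd_pow p hple) (ZMod (p ^ d.factorization p)))
      (Mx_spec x hpn)
    rw [map_natCast] at h1
    rw [h1, ZMod.castHom_apply, PadicInt.cast_toZModPow _ _ hple]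
  have e2 := Mx_spec x hp
  have h3 : ((Mx x n : ℕ) : ZMod (p ^ d.factorization p)) = ((Mx x d : ℕ) : _) :=
    e1.trans e2.symm
  have := dvd_of_zmod_eq h3
  exact_mod_cast this

lemma Mx_add_dvd (x y : ∀ p : Nat.Primes, ℤ_[(p : ℕ)]) {d : ℕ} (hd : d ≠ 0) :
    (d : ℤ) ∣ (Mx (x + y) d : ℤ) - ((Mx x d : ℤ) + (Mx y d : ℤ)) := by
  apply int_dvd_of_forall_primepow hd
  intro p hp
  have pp := Nat.prime_of_mem_primeFactors hp
  have e1 := Mx_spec (x + y) hp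
  have e2 := Mx_spec x hp
  have e3 := Mx_spec y hp
  have e4 : ((Mx (x + y) d : ℕ) : ZMod (p ^ d.factorization p)) =
      ((Mx x d : ℕ) : ZMod (p ^ d.factorization p)) + ((Mx y d : ℕ) : _) := by
    rw [e1, e2, e3]
    exact map_add _ (x ⟨p, pp⟩) (y ⟨p, pp⟩)
  have h5 : (((Mx (x + y) d : ℤ)) : ZMod (p ^ d.factorization p)) =
      (((Mx x d : ℤ) + (Mx y d : ℤ) : ℤ) : ZMod (p ^ d.factorization p)) := by
    push_cast
    exact_mod_cast e4
  have h7 := Int.ModEq.dvd <| (ZMod.intCast_eq_intCast_iff _ _ _).mp h5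
  have h8 : ((p : ℤ) ^ d.factorization p) ∣
      (Mx x d : ℤ) + (Mx y d : ℤ) - (Mx (x + y) d : ℤ) := by exact_mod_cast h7
  exact dvd_sub_comm.mp h8


/-- the character attached to `x`, on `ℚ`. -/
def chi (x : ∀ p : Nat.Primes, ℤ_[(p : ℕ)]) (q : ℚ) : Circle :=
  ee (((Mx x q.den : ℤ) : ℚ) * q)

lemma chi_eq_of_dvd (x : ∀ p : Nat.Primes, ℤ_[(p : ℕ)]) {n : ℕ} (hn : n ≠ 0) {q : ℚ}
    (h : q.den ∣ n) : chi x q = ee (((Mx x n : ℤ) : ℚ) * q) :=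
  (ee_congr (Mx_mod_dvd x hn h)).symm

lemma chi_add (x : ∀ p : Nat.Primes, ℤ_[(p : ℕ)]) (q r : ℚ) :
    chi x (q + r) = chi x q * chi x r := by
  have hn0 : q.den * r.den ≠ 0 := Nat.mul_ne_zero q.den_nz r.den_nz
  rw [chi_eq_of_dvd x hn0 (Rat.add_den_dvd q r), chi_eq_of_dvd x hn0 (dvd_mul_right _ _),
    chi_eq_of_dvd x hn0 (dvd_mul_left _ _), ← ee_add, mul_add]

lemma chi_int (x : ∀ p : Nat.Primes, ℤ_[(p : ℕ)]) (k : ℤ) : chi x (k : ℚ) = 1 := by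
  have h : ((Mx x ((k : ℚ)).den : ℤ) : ℚ) * k = ((Mx x (k : ℚ).den * k : ℤ) : ℚ) := by
    push_cast; ring
  rw [chi, h, ee_int]

lemma chi_add_x (x y : ∀ p : Nat.Primes, ℤ_[(p : ℕ)]) (q : ℚ) :
    chi (x + y) q = chi x q * chi y q := by
  have h := Mx_add_dvd x y (d := q.den) q.den_nz
  have h1 : chi (x + y) q = ee ((((Mx x q.den : ℤ) + (Mx y q.den : ℤ) : ℤ) : ℚ) * q) :=
    ee_congr h
  have h2 : (((Mx x q.den : ℤ) + (Mx y q.den : ℤ) : ℤ) : ℚ) * q =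
      ((Mx x q.den : ℤ) : ℚ) * q + ((Mx y q.den : ℤ) : ℚ) * q := by push_cast; ring
  rw [h1, h2, ee_add]; rfl

/-- the quotient group `ℚ/ℤ`. -/
abbrev QZ : Type := ℚ ⧸ AddSubgroup.zmultiples (1 : ℚ)

def chiHom (x : ∀ p : Nat.Primes, ℤ_[(p : ℕ)]) : ℚ →+ Additive Circle :=
  AddMonoidHom.mk' (fun q => Additive.ofMul (chi x q)) (chi_add x)

lemma chiHom_ker (x : ∀ p : Nat.Primes, ℤ_[(p : ℕ)]) :
    AddSubgroup.zmultiples (1 : ℚ) ≤ (chiHom x).ker := by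
  rintro a ⟨k, rfl⟩
  have : (k • (1 : ℚ)) = (k : ℚ) := by rw [zsmul_eq_mul, mul_one]
  simp only [AddMonoidHom.mem_ker, chiHom, AddMonoidHom.mk'_apply, this, chi_int]
  exact congrArg Additive.ofMul (chi_int x k)

def PhiHom (x : ∀ p : Nat.Primes, ℤ_[(p : ℕ)]) : QZ →+ Additive Circle :=
  QuotientAddGroup.lift _ (chiHom x) (chiHom_ker x)

def Phi (x : ∀ p : Nat.Primes, ℤ_[(p : ℕ)]) : QZ → Circle := fun a => (PhiHom x a).toMul

lemma Phi_mk (x : ∀ p : Nat.Primes, ℤ_[(p : ℕ)]) (q : ℚ) :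
    Phi x (QuotientAddGroup.mk q) = chi x q := rfl

lemma Phi_prop (x : ∀ p : Nat.Primes, ℤ_[(p : ℕ)]) (a b : QZ) :
    Phi x (a + b) = Phi x a * Phi x b := by
  simp only [Phi, map_add]; rfl

lemma ee_cancel {a b : ℤ} {q : ℚ} (h : ee ((a : ℚ) * q) = ee ((b : ℚ) * q)) :
    ∃ m : ℤ, ((a - b : ℤ) : ℚ) * q = m := by
  have h2 : ((a : ℚ)) * q = ((a - b : ℤ) : ℚ) * q + (b : ℚ) * q := by push_cast; ring
  rw [h2, ee_add] at h
  have h3 : ee (((a - b : ℤ) : ℚ) * q) = 1 := by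
    have := mul_right_cancel (h.trans (one_mul (ee ((b : ℚ) * q))).symm)
    exact this
  exact ee_eq_one_iff.mp h3

lemma Mx_spec_pp (x : ∀ p : Nat.Primes, ℤ_[(p : ℕ)]) {p : ℕ} (pp : p.Prime) {k : ℕ}
    (hk : k ≠ 0) : ((Mx x (p ^ k) : ℕ) : ZMod (p ^ k)) =
      @PadicInt.toZModPow p ⟨pp⟩ k (x ⟨p, pp⟩) := by
  have hp : p ∈ (p ^ k).primeFactors := by
    rw [Nat.primeFactors_prime_pow hk pp]
    exact Finset.mem_singleton_self p
  have hfac : (p ^ k).factorization p = k := by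
    rw [pp.factorization_pow]; simp
  have h := Mx_spec x hp
  rw [hfac] at h
  exact h

lemma Phi_injective : Function.Injective Phi := by
  intro x y h
  funext p
  refine PadicInt.ext_of_toZModPow.mp ?_
  intro k
  rcases Nat.eq_zero_or_pos k with hk | hk
  · subst hk
    haveI : Subsingleton (ZMod ((p : ℕ) ^ 0)) := by rw [pow_zero]; infer_instance
    exact Subsingleton.elim _ _
  · have pp : (p : ℕ).Prime := p.2
    set P : ℕ := (p : ℕ) with hP
    have hpk0 : 0 < P ^ k := pow_pos pp.pos k
    set q : ℚ := ((P ^ k : ℕ) : ℚ)⁻¹ with hq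
    have hden : q.den = P ^ k := Rat.inv_natCast_den_of_pos hpk0
    have hchi : chi x q = chi y q := by
      have := congrFun h (QuotientAddGroup.mk q)
      rwa [Phi_mk, Phi_mk] at this
    rw [chi, chi, hden] at hchi
    obtain ⟨m, hm⟩ := ee_cancel hchi
    have hcast : ((P ^ k : ℕ) : ℚ) ≠ 0 := Nat.cast_ne_zero.mpr hpk0.ne'
    have hZ : (Mx x (P ^ k) : ℤ) - (Mx y (P ^ k) : ℤ) = m * (P ^ k : ℕ) := by
      have : (((Mx x (P ^ k) : ℤ) - (Mx y (P ^ k) : ℤ) : ℤ) : ℚ) = m * ((P ^ k : ℕ) : ℚ) := by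
        rw [← hm, hq]
        field_simp
      exact_mod_cast this
    have hdvd : ((P ^ k : ℕ) : ℤ) ∣ (Mx x (P ^ k) : ℤ) - (Mx y (P ^ k) : ℤ) := ⟨m, by rw [hZ]; ring⟩
    have hmod : ((Mx x (P ^ k) : ℕ) : ZMod (P ^ k)) = ((Mx y (P ^ k) : ℕ) : ZMod (P ^ k)) := by
      have h5 : ((Mx x (P ^ k) : ℤ) : ZMod (P ^ k)) = ((Mx y (P ^ k) : ℤ) : ZMod (P ^ k)) :=
        (ZMod.intCast_eq_intCast_iff _ _ _).mpr (Int.ModEq.symm ((Int.modEq_iff_dvd).mpr hdvd))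
      push_cast at h5 ⊢
      exact h5
    rw [Mx_spec_pp x pp hk.ne', Mx_spec_pp y pp hk.ne'] at hmod
    exact hmod

lemma exp_npow (t : ℝ) (n : ℕ) : Circle.exp t ^ n = Circle.exp ((n : ℝ) * t) := by
  induction n with
  | zero => simp
  | succ n ih =>
      rw [pow_succ, ih, ← Circle.exp_add]
      push_cast
      ring_nf

lemma exists_root (z : Circle) {n : ℕ} (hn : n ≠ 0) (h : z ^ n = 1) :
    ∃ c : ℤ, z = ee ((c : ℚ) * ((n : ℚ))⁻¹) := by
  have hz : Circle.exp (Complex.arg (z : ℂ)) = z := Circle.exp_arg z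
  have hpow : Circle.exp ((n : ℝ) * Complex.arg (z : ℂ)) = 1 := by
    rw [← exp_npow, hz, h]
  obtain ⟨m, hm⟩ := Circle.exp_eq_one.mp hpow
  refine ⟨m, ?_⟩
  rw [← hz, ee]
  congr 1
  have hn' : (n : ℝ) ≠ 0 := Nat.cast_ne_zero.mpr hn
  have harg : Complex.arg (z : ℂ) = (m : ℝ) * (2 * π) / n := by
    field_simp
    linarith [hm]
  rw [harg]
  push_cast
  field_simp

/-- `mkq` is the canonical quotient map. -/
def mkq : ℚ → QZ := QuotientAddGroup.mk

lemma mkq_add (q r : ℚ) : mkq (q + r) = mkq q + mkq r := rfl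

lemma mkq_nsmul_inv {P k l : ℕ} (hP : P ≠ 0) (hkl : k ≤ l) :
    (P ^ (l - k)) • mkq ((P ^ l : ℕ) : ℚ)⁻¹ = mkq ((P ^ k : ℕ) : ℚ)⁻¹ := by
  have h1 : ∀ (n : ℕ) (q : ℚ), n • mkq q = mkq ((n : ℚ) * q) := by
    intro n q
    rw [show ((n : ℚ) * q) = n • q from (nsmul_eq_mul (α := ℚ) n q).symm, mkq]
    exact (map_nsmul (QuotientAddGroup.mk' _) n q).symm
  rw [h1]
  congr 1
  have hpl : ((P ^ l : ℕ) : ℚ) = ((P ^ (l - k) : ℕ) : ℚ) * ((P ^ k : ℕ) : ℚ) := by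
    push_cast
    rw [← pow_add]
    congr 1
    omega
  rw [hpl, mul_inv]
  have h2 : ((P ^ (l - k) : ℕ) : ℚ) ≠ 0 := Nat.cast_ne_zero.mpr (pow_ne_zero _ hP)
  field_simp

lemma int_dvd_of_rat {Δ : ℤ} {N : ℕ} (hN : N ≠ 0) {m : ℤ} (h : (Δ : ℚ) * ((N : ℕ) : ℚ)⁻¹ = m) :
    ((N : ℕ) : ℤ) ∣ Δ := by
  refine ⟨m, ?_⟩
  have hN' : ((N : ℕ) : ℚ) ≠ 0 := Nat.cast_ne_zero.mpr hN
  have : (Δ : ℚ) = ((N : ℕ) : ℚ) * m := by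
    field_simp at h
    linarith
  exact_mod_cast this

section Surj

variable (f : QZ → Circle) (hf : ∀ a b, f (a + b) = f a * f b)
include hf

/-- bundling `f` as an `AddMonoidHom`. -/
def fHom : QZ →+ Additive Circle := AddMonoidHom.mk' (fun a => Additive.ofMul (f a)) hf

lemma f_zero : f 0 = 1 := by
  have h := hf 0 0
  rw [add_zero] at h
  have h2 : f 0 * f 0 = f 0 * 1 := by rw [mul_one]; exact h.symm
  exact mul_left_cancel h2

lemma f_pow_root (p : Nat.Primes) (k : ℕ) :
    f (mkq ((((p : ℕ) ^ k : ℕ)) : ℚ)⁻¹) ^ ((p : ℕ) ^ k) = 1 := by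
  have h0 : ((p : ℕ) ^ k) • mkq ((((p : ℕ) ^ k : ℕ)) : ℚ)⁻¹ = 0 := by
    have := mkq_nsmul_inv (P := (p : ℕ)) (k := 0) (l := k) p.2.pos.ne' (Nat.zero_le k)
    rw [Nat.sub_zero] at this
    rw [this]
    have h1 : (((p : ℕ) ^ 0 : ℕ) : ℚ)⁻¹ = 1 := by norm_num
    rw [h1, mkq]
    exact (QuotientAddGroup.eq_zero_iff (1 : ℚ)).mpr (AddSubgroup.mem_zmultiples 1)
  have h2 := map_nsmul (fHom f hf) ((p : ℕ) ^ k) (mkq ((((p : ℕ) ^ k : ℕ)) : ℚ)⁻¹)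
  rw [h0] at h2
  have h3 : f 0 = f (mkq ((((p : ℕ) ^ k : ℕ)) : ℚ)⁻¹) ^ ((p : ℕ) ^ k) := by
    exact congrArg Additive.toMul h2
  rw [← h3, f_zero f hf]

/-- choice of discrete logarithms. -/
def ccc (p : Nat.Primes) (k : ℕ) : ℤ :=
  Classical.choose (exists_root _ (pow_ne_zero k p.2.pos.ne') (f_pow_root f hf p k))

lemma ccc_spec (p : Nat.Primes) (k : ℕ) :
    f (mkq ((((p : ℕ) ^ k : ℕ)) : ℚ)⁻¹) =
      ee ((ccc f hf p k : ℚ) * ((((p : ℕ) ^ k : ℕ)) : ℚ)⁻¹) :=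
  Classical.choose_spec (exists_root _ (pow_ne_zero k p.2.pos.ne') (f_pow_root f hf p k))

lemma ccc_compat (p : Nat.Primes) {k l : ℕ} (hkl : k ≤ l) :
    ((p : ℕ) : ℤ) ^ k ∣ ccc f hf p l - ccc f hf p k := by
  set P : ℕ := (p : ℕ) with hP
  have hP0 : P ≠ 0 := p.2.pos.ne'
  have h1 := mkq_nsmul_inv (P := P) hP0 hkl
  have h2 := map_nsmul (fHom f hf) (P ^ (l - k)) (mkq ((P ^ l : ℕ) : ℚ)⁻¹)
  rw [h1] at h2
  have h3 : f (mkq ((P ^ k : ℕ) : ℚ)⁻¹) =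
      f (mkq ((P ^ l : ℕ) : ℚ)⁻¹) ^ (P ^ (l - k)) := by
    have := congrArg Additive.toMul h2
    exact this
  have h4 : f (mkq ((P ^ k : ℕ) : ℚ)⁻¹) = ee ((ccc f hf p l : ℚ) * ((P ^ k : ℕ) : ℚ)⁻¹) := by
    rw [h3, ccc_spec f hf p l, ← ee_npow]
    congr 1
    push_cast
    have hl : (P : ℚ) ^ l = (P : ℚ) ^ (l - k) * (P : ℚ) ^ k := by
      rw [← pow_add]; congr 1; omega
    have hPk : ((P : ℚ)) ^ k ≠ 0 := pow_ne_zero _ (Nat.cast_ne_zero.mpr hP0)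
    have hPlk : ((P : ℚ)) ^ (l - k) ≠ 0 := pow_ne_zero _ (Nat.cast_ne_zero.mpr hP0)
    rw [hl, mul_inv]
    field_simp
  have h5 : ee ((ccc f hf p l : ℚ) * ((P ^ k : ℕ) : ℚ)⁻¹) =
      ee ((ccc f hf p k : ℚ) * ((P ^ k : ℕ) : ℚ)⁻¹) := by
    rw [← h4, ccc_spec f hf p k]
  obtain ⟨m, hm⟩ := ee_cancel h5
  have h6 := int_dvd_of_rat (N := P ^ k) (pow_ne_zero _ hP0) (by exact_mod_cast hm)
  exact_mod_cast h6

end Surj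

lemma exists_padic (p : ℕ) (pp : p.Prime) (c : ℕ → ℤ)
    (hc : ∀ {k l : ℕ}, k ≤ l → (p : ℤ) ^ k ∣ c l - c k) :
    ∃ z : (@PadicInt p ⟨pp⟩), ∀ k, @PadicInt.toZModPow p ⟨pp⟩ k z = ((c k : ℤ) : ZMod (p ^ k)) := by
  haveI : Fact p.Prime := ⟨pp⟩
  have compat : ∀ (k1 k2 : ℕ) (hk : k1 ≤ k2),
      (ZMod.castHom (pow_dvd_pow p hk) (ZMod (p ^ k1))).comp
        (Polynomial.eval₂RingHom (Int.castRingHom (ZMod (p ^ k2))) ((c k2 : ZMod (p ^ k2)))) =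
      Polynomial.eval₂RingHom (Int.castRingHom (ZMod (p ^ k1))) ((c k1 : ZMod (p ^ k1))) := by
    intro k1 k2 hk
    apply Polynomial.ringHom_ext
    · intro a
      simp [Polynomial.coe_eval₂RingHom, Polynomial.eval₂_C, map_intCast]
    · simp only [RingHom.coe_comp, Function.comp_apply, Polynomial.coe_eval₂RingHom,
        Polynomial.eval₂_X]
      rw [map_intCast]
      rw [ZMod.intCast_eq_intCast_iff]
      refine (Int.modEq_iff_dvd.mpr ?_)
      have := hc hk
      have h2 : ((p : ℤ)) ^ k1 ∣ c k1 - c k2 := dvd_sub_comm.mp this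
      exact_mod_cast h2
  refine ⟨PadicInt.lift compat Polynomial.X, fun k => ?_⟩
  have h := PadicInt.lift_spec compat k
  have h2 := congrFun (congrArg DFunLike.coe h) Polynomial.X
  simpa [Polynomial.coe_eval₂RingHom, Polynomial.eval₂_X] using h2

/-- set of generators of `ℚ/ℤ`. -/
def SS : Set QZ :=
  Set.range (fun pk : Nat.Primes × ℕ => mkq ((((pk.1 : ℕ) ^ pk.2 : ℕ)) : ℚ)⁻¹)

lemma den_dvd_of_mul_int {q : ℚ} {n : ℕ} (hn : n ≠ 0) {z : ℤ} (h : q * (n : ℚ) = (z : ℚ)) :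
    q.den ∣ n := by
  have hn' : ((n : ℕ) : ℚ) ≠ 0 := Nat.cast_ne_zero.mpr hn
  have hq : q = (z : ℚ) / (n : ℚ) := by
    rw [eq_div_iff hn']
    exact h
  have h2 : q = Rat.divInt z (n : ℤ) := by
    rw [Rat.divInt_eq_div, hq]
    norm_num
  have h3 : ((Rat.divInt z (n : ℤ)).den : ℤ) ∣ (n : ℤ) := Rat.den_dvd z (n : ℤ)
  rw [← h2] at h3
  exact_mod_cast h3

lemma mkq_mem_closure (q : ℚ) : mkq q ∈ AddSubgroup.closure SS := by
  suffices H : ∀ n (q : ℚ), q.den = n → mkq q ∈ AddSubgroup.closure SS from H q.den q rfl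
  intro n
  induction n using Nat.strong_induction_on with
  | _ n IH =>
  intro q hden
  by_cases h1 : q.den = 1
  · have hz : mkq q = 0 := by
      refine (QuotientAddGroup.eq_zero_iff q).mpr ⟨q.num, ?_⟩
      show q.num • (1 : ℚ) = q
      rw [zsmul_eq_mul, mul_one]
      exact (Rat.den_eq_one_iff q).mp h1
    rw [hz]
    exact zero_mem _
  · obtain ⟨p, pp, hpdvd⟩ := Nat.exists_prime_and_dvd h1
    have hq0 : q.den ≠ 0 := q.den_nz
    set e := q.den.factorization p with he
    set m := q.den / p ^ e with hm
    have hmm : p ^ e * m = q.den := Nat.ordProj_mul_ordCompl_eq_self q.den p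
    have he0 : e ≠ 0 := (pp.factorization_pos_of_dvd hq0 hpdvd).ne'
    have hm0 : m ≠ 0 := by
      intro h0
      rw [h0, mul_zero] at hmm
      exact hq0 hmm.symm
    have hcop : Nat.Coprime (p ^ e) m := Nat.Coprime.pow_left e (Nat.coprime_ordCompl pp hq0)
    obtain ⟨u, v, huv⟩ := Nat.isCoprime_iff_coprime.mpr hcop
    set q1 : ℚ := q * v * ((m : ℕ) : ℚ) with hq1def
    set q2 : ℚ := q * u * (((p ^ e : ℕ)) : ℚ) with hq2def
    have hdQ : (q.den : ℚ) * q = q.num := den_mul_self q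
    have hpmQ : ((p : ℚ)) ^ e * (m : ℚ) = (q.den : ℚ) := by exact_mod_cast congrArg (Nat.cast : ℕ → ℚ) hmm
    have hQ : ((u : ℚ)) * ((p : ℚ)) ^ e + (v : ℚ) * (m : ℚ) = 1 := by
      have := congrArg (Int.cast : ℤ → ℚ) huv
      push_cast at this
      linarith
    have hsplit : q = q2 + q1 := by
      rw [hq1def, hq2def]
      push_cast
      linear_combination (-q) * hQ
    have hq1mul : q1 * (((p ^ e : ℕ)) : ℚ) = ((v * q.num : ℤ) : ℚ) := by
      rw [hq1def]
      push_cast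
      linear_combination (v : ℚ) * q * hpmQ + (v : ℚ) * hdQ
    have hq1den : q1.den ∣ p ^ e := den_dvd_of_mul_int (pow_ne_zero e pp.pos.ne') hq1mul
    obtain ⟨j, hj, hq1d⟩ := (Nat.dvd_prime_pow pp).mp hq1den
    have hmem1 : mkq q1 ∈ AddSubgroup.closure SS := by
      have hS : mkq ((((p ^ j : ℕ)) : ℚ))⁻¹ ∈ SS := ⟨(⟨p, pp⟩, j), rfl⟩
      have hq1eq : q1 = (q1.num : ℚ) * ((((p ^ j : ℕ)) : ℚ))⁻¹ := by
        rw [← hq1d, ← div_eq_mul_inv]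
        exact (Rat.num_div_den q1).symm
      have hstep : mkq q1 = q1.num • mkq ((((p ^ j : ℕ)) : ℚ))⁻¹ := by
        have hmap := map_zsmul (QuotientAddGroup.mk' (AddSubgroup.zmultiples (1 : ℚ)))
          q1.num ((((p ^ j : ℕ)) : ℚ))⁻¹
        calc mkq q1 = mkq (q1.num • ((((p ^ j : ℕ)) : ℚ))⁻¹) := by
              rw [zsmul_eq_mul]; exact congrArg mkq hq1eq
          _ = q1.num • mkq ((((p ^ j : ℕ)) : ℚ))⁻¹ := hmap
      rw [hstep]
      exact zsmul_mem (AddSubgroup.subset_closure hS) _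
    have hq2mul : q2 * ((m : ℕ) : ℚ) = ((u * q.num : ℤ) : ℚ) := by
      rw [hq2def]
      push_cast
      linear_combination (u : ℚ) * q * hpmQ + (u : ℚ) * hdQ
    have hq2den : q2.den ∣ m := den_dvd_of_mul_int hm0 hq2mul
    have hmlt : m < q.den := by
      rw [hm]
      exact Nat.div_lt_self (Nat.pos_of_ne_zero hq0) (Nat.one_lt_pow he0 pp.one_lt)
    have hlt : q2.den < n := by
      rw [← hden]
      exact lt_of_le_of_lt (Nat.le_of_dvd (Nat.pos_of_ne_zero hm0) hq2den) hmlt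
    have hmem2 := IH q2.den hlt q2 rfl
    have hstep2 : mkq q = mkq q2 + mkq q1 := by rw [hsplit]; rfl
    rw [hstep2]
    exact add_mem hmem2 hmem1

lemma closure_SS_top : AddSubgroup.closure SS = ⊤ := by
  rw [eq_top_iff]
  rintro a -
  obtain ⟨q, rfl⟩ := QuotientAddGroup.mk_surjective a
  exact mkq_mem_closure q

lemma Phi_eq_f (f : QZ → Circle) (hf : ∀ a b, f (a + b) = f a * f b) : ∃ x, Phi x = f := by
  have hcc := fun p : Nat.Primes => exists_padic (p : ℕ) p.2 (ccc f hf p)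
    (fun {k l} hkl => ccc_compat f hf p hkl)
  choose xf hxf using hcc
  refine ⟨xf, ?_⟩
  have hEq : PhiHom xf = fHom f hf := by
    apply AddMonoidHom.eq_of_eqOn_dense closure_SS_top
    rintro a ⟨⟨p, k⟩, rfl⟩
    show Additive.ofMul (chi xf ((((p : ℕ) ^ k : ℕ)) : ℚ)⁻¹) =
      Additive.ofMul (f (mkq ((((p : ℕ) ^ k : ℕ)) : ℚ)⁻¹))
    apply congrArg Additive.ofMul
    by_cases hk : k = 0
    · subst hk
      have h1 : (((p : ℕ) ^ 0 : ℕ) : ℚ)⁻¹ = ((1 : ℤ) : ℚ) := by norm_num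
      rw [h1, chi_int]
      have h2 : mkq ((1 : ℤ) : ℚ) = 0 :=
        (QuotientAddGroup.eq_zero_iff _).mpr (by simpa using AddSubgroup.mem_zmultiples (1 : ℚ))
      rw [h2, f_zero f hf]
    · set P : ℕ := (p : ℕ) with hPdef
      set q : ℚ := ((P ^ k : ℕ) : ℚ)⁻¹ with hqdef
      have hden : q.den = P ^ k := Rat.inv_natCast_den_of_pos (pow_pos p.2.pos k)
      have hzm := hxf p k
      have hMx := Mx_spec_pp xf (p := P) p.2 (k := k) hk
      have hcast : ((Mx xf (P ^ k) : ℤ) : ZMod (P ^ k)) = ((ccc f hf p k : ℤ) : ZMod (P ^ k)) := by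
        push_cast
        rw [hMx]
        exact hzm
      have hdvd0 := Int.ModEq.dvd ((ZMod.intCast_eq_intCast_iff _ _ _).mp hcast)
      have hdvd : ((P ^ k : ℕ) : ℤ) ∣ (Mx xf (P ^ k) : ℤ) - ccc f hf p k :=
        dvd_sub_comm.mp hdvd0
      have hstep : chi xf q = ee ((ccc f hf p k : ℚ) * q) := by
        rw [chi, hden]
        exact ee_congr (by rw [hden]; exact_mod_cast hdvd)
      rw [hstep, ← ccc_spec f hf p k]
  funext a
  exact congrArg (fun g : QZ →+ Additive Circle => Additive.toMul (g a)) hEq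

lemma chi_eventually (q : ℚ) (x₀ : ∀ p : Nat.Primes, ℤ_[(p : ℕ)]) :
    ∀ᶠ x in nhds x₀, chi x q = chi x₀ q := by
  have key : ∀ᶠ x in nhds x₀, ∀ pp : {y // y ∈ q.den.primeFactors},
      @PadicInt.toZModPow pp.1 ⟨Nat.prime_of_mem_primeFactors pp.2⟩
          (q.den.factorization pp.1) (x ⟨pp.1, Nat.prime_of_mem_primeFactors pp.2⟩) =
        @PadicInt.toZModPow pp.1 ⟨Nat.prime_of_mem_primeFactors pp.2⟩
          (q.den.factorization pp.1) (x₀ ⟨pp.1, Nat.prime_of_mem_primeFactors pp.2⟩) := by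
    rw [Filter.eventually_all]
    intro pp
    have ppr := Nat.prime_of_mem_primeFactors pp.2
    haveI : Fact pp.1.Prime := ⟨ppr⟩
    set P' : Nat.Primes := ⟨pp.1, ppr⟩ with hP'
    set e := q.den.factorization pp.1 with hedef
    have hcont : ContinuousAt (fun x : (∀ p : Nat.Primes, ℤ_[(p : ℕ)]) => x P') x₀ :=
      (continuous_apply P').continuousAt
    have hppos : (0 : ℝ) < (pp.1 : ℝ) := by exact_mod_cast ppr.pos
    have hr : (0 : ℝ) < (pp.1 : ℝ) ^ (-(e : ℤ)) := zpow_pos hppos _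
    have hev : ∀ᶠ z in nhds (x₀ P'),
        PadicInt.toZModPow (p := pp.1) e z = PadicInt.toZModPow e (x₀ P') := by
      filter_upwards [Metric.ball_mem_nhds (x₀ P') hr] with z hz
      have hnorm : ‖z - x₀ P'‖ ≤ (pp.1 : ℝ) ^ (-(e : ℤ)) :=
        le_of_lt (by rw [Metric.mem_ball, dist_eq_norm] at hz; exact hz)
      have hmem := (PadicInt.norm_le_pow_iff_mem_span_pow _ e).mp hnorm
      have hker : z - x₀ P' ∈ RingHom.ker (PadicInt.toZModPow (p := pp.1) e) := by
        rw [PadicInt.ker_toZModPow]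
        exact hmem
      have h0 := RingHom.mem_ker.mp hker
      rw [map_sub] at h0
      exact sub_eq_zero.mp h0
    exact hcont.eventually hev
  filter_upwards [key] with x hx
  have htf : tfun x q.den = tfun x₀ q.den := by
    funext r
    unfold tfun
    by_cases hr : r.Prime
    · rw [dif_pos hr, dif_pos hr]
      by_cases hmem : r ∈ q.den.primeFactors
      · exact congrArg ZMod.val (hx ⟨r, hmem⟩)
      · have h0 : q.den.factorization r = 0 := by
          have := Finsupp.notMem_support_iff.mp (by
            rwa [show q.den.factorization.support = q.den.primeFactors from rfl])
          exact this
        haveI : Subsingleton (ZMod (r ^ q.den.factorization r)) := by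
          rw [h0, pow_zero]
          infer_instance
        exact congrArg ZMod.val (Subsingleton.elim _ _)
    · rw [dif_neg hr, dif_neg hr]
  have hM : Mx x q.den = Mx x₀ q.den :=
    congrArg (fun t => (Nat.chineseRemainderOfFinset t
      (fun p => p ^ q.den.factorization p) q.den.primeFactors (MxHs q.den) (MxCop q.den)).1) htf
  unfold chi
  rw [hM]

lemma Phi_add_x (x y : ∀ p : Nat.Primes, ℤ_[(p : ℕ)]) :
    Phi (x + y) = fun a => Phi x a * Phi y a := by
  funext a
  obtain ⟨q, rfl⟩ := QuotientAddGroup.mk_surjective a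
  exact chi_add_x x y q

end QZAux

/-- The additive group `∏_p ℤ_p` (with the product topology) is
isomorphic, as a topological group, to the Pontryagin dual of the discrete group `ℚ/ℤ`,
i.e. to the group of all homomorphisms from `ℚ/ℤ` to the circle group with the topology
of pointwise convergence. -/
theorem prod_padicInt_iso_dual_of_QmodZ :
    haveI : ∀ p : Nat.Primes, Fact (p.1.Prime) := fun p => ⟨p.2⟩
    ∃ e : (∀ p : Nat.Primes, ℤ_[(p : ℕ)]) ≃ₜ
        {f : (ℚ ⧸ AddSubgroup.zmultiples (1 : ℚ)) → Circle // ∀ a b, f (a + b) = f a * f b},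
      ∀ x y : ∀ p : Nat.Primes, ℤ_[(p : ℕ)],
        (e (x + y)).1 = fun a => (e x).1 a * (e y).1 a := by
  haveI : ∀ p : Nat.Primes, Fact (p.1.Prime) := fun p => ⟨p.2⟩
  classical
  set F : (∀ p : Nat.Primes, ℤ_[(p : ℕ)]) →
      {f : QZAux.QZ → Circle // ∀ a b, f (a + b) = f a * f b} :=
    fun x => ⟨QZAux.Phi x, QZAux.Phi_prop x⟩ with hF
  have hbij : Function.Bijective F := by
    constructor
    · intro x y h
      exact QZAux.Phi_injective (congrArg Subtype.val h)
    · rintro ⟨f, hf⟩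
      obtain ⟨x, hx⟩ := QZAux.Phi_eq_f f hf
      exact ⟨x, Subtype.ext hx⟩
  have hcont : Continuous F := by
    apply Continuous.subtype_mk
    apply continuous_pi
    intro a
    obtain ⟨q, rfl⟩ := QuotientAddGroup.mk_surjective a
    refine continuous_iff_continuousAt.mpr fun x₀ =>
      Filter.EventuallyEq.continuousAt
        (y := QZAux.Phi x₀ (QuotientAddGroup.mk q)) ?_
    exact QZAux.chi_eventually q x₀
  let E : (∀ p : Nat.Primes, ℤ_[(p : ℕ)]) ≃
      {f : QZAux.QZ → Circle // ∀ a b, f (a + b) = f a * f b} := Equiv.ofBijective F hbij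
  have hcE : Continuous ⇑E := hcont
  refine ⟨hcE.homeoOfEquivCompactToT2, ?_⟩
  intro x y
  show (F (x + y)).1 = fun a => (F x).1 a * (F y).1 a
  exact QZAux.Phi_add_x x y
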